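/- Suppose the hypothesis space H is a convex set of functions ψ : [0,R] → ℝ satisfying the coercivity condition with constant c_H > 0, i.e., (1/N_e) ∫ ‖F_{ψ₁−ψ₂}(x)‖² π(dx) ≥ c_H ‖ψ₁ − ψ₂‖²_{L²*_ρ} for all ψ₁, ψ₂ ∈ H, and suppose φ̂ ∈ H minimizes the expected error E over H. Then for every ψ ∈ H, c_H ‖ψ − φ̂‖²_{L²*_ρ} ≤ E(ψ) − E(φ̂). In particular, the minimizer of E over H is unique up to ‖·‖_{L²*_ρ}-null differences. (Inequality (34) of the paper and the uniqueness of the expected estimator.) -/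

import Mathlib

/-!
STATEMENT 12 (inequality (34) and uniqueness of the expected estimator): under
coercivity and convexity, c_H ‖ψ - φ̂‖²_{L²*_ρ} ≤ E(ψ) - E(φ̂) for all ψ ∈ H.
-/

open scoped BigOperators
open MeasureTheory

noncomputable section

abbrev Vd (d : ℕ) := EuclideanSpace ℝ (Fin d)
abbrev St (n d : ℕ) := EuclideanSpace ℝ (Fin n × Fin d)

def blk {n d : ℕ} (x : St n d) (i : Fin n) : Vd d :=
  (WithLp.equiv 2 (Fin d → ℝ)).symm fun a => x (i, a)

def rdist {n d : ℕ} (x : St n d) (i j : Fin n) : ℝ := ‖blk x j - blk x i‖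

def Fcoup {n d : ℕ} (k : Fin n → Fin n → ℝ) (ψ : ℝ → ℝ) (y : St n d) : St n d :=
  (WithLp.equiv 2 (Fin n × Fin d → ℝ)).symm fun p =>
    ∑ j, k p.1 j * ψ (rdist y p.1 j) * (y (j, p.2) - y (p.1, p.2))

open Classical in
def edgeFinset {n : ℕ} (k : Fin n → Fin n → ℝ) : Finset (Fin n × Fin n) :=
  Finset.univ.filter fun p => p.1 < p.2 ∧ 0 < k p.1 p.2

/-- `‖ψ‖²_{L²*_ρ}`, with `ρ` the edge-distance distribution under `π`. -/
def rhoNormSq {n d : ℕ} (k : Fin n → Fin n → ℝ) (π : Measure (St n d)) (ψ : ℝ → ℝ) : ℝ :=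
  (((edgeFinset k).card : ℝ))⁻¹ *
    ∑ p ∈ edgeFinset k, ∫ x, (ψ (rdist x p.1 p.2) * rdist x p.1 p.2) ^ 2 ∂π

/-- The expected error `E(ψ) = (1/N_e)(∫ ‖F_{ψ-φ}‖² dπ + σ²)`. -/
def expErr {n d : ℕ} (k : Fin n → Fin n → ℝ) (φ : ℝ → ℝ) (σ : ℝ)
    (π : Measure (St n d)) (ψ : ℝ → ℝ) : ℝ :=
  (((edgeFinset k).card : ℝ))⁻¹ * ((∫ x, ‖Fcoup k ψ x - Fcoup k φ x‖ ^ 2 ∂π) + σ ^ 2)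

/-- If `H` is convex and coercive with constant `c_H > 0`, and
`φ̂ ∈ H` minimizes `E` over `H`, then `c_H ‖ψ - φ̂‖²_{L²*_ρ} ≤ E(ψ) - E(φ̂)` for every
`ψ ∈ H`; in particular the minimizer is unique up to `‖·‖_{L²*_ρ}`-null differences. -/

lemma Fcoup_sub {n d : ℕ} (k : Fin n → Fin n → ℝ) (ψ₁ ψ₂ : ℝ → ℝ) (x : St n d) :
    Fcoup k (fun r => ψ₁ r - ψ₂ r) x = Fcoup k ψ₁ x - Fcoup k ψ₂ x := by
  ext p
  simp only [Fcoup, WithLp.equiv_symm_apply, PiLp.toLp_apply, PiLp.sub_apply, ← Finset.sum_sub_distrib]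
  exact Finset.sum_congr rfl fun j _ => by ring

lemma Fcoup_combo {n d : ℕ} (k : Fin n → Fin n → ℝ) (ψ₁ ψ₂ : ℝ → ℝ) (a b : ℝ) (x : St n d) :
    Fcoup k (a • ψ₁ + b • ψ₂) x = a • Fcoup k ψ₁ x + b • Fcoup k ψ₂ x := by
  ext p
  simp only [Fcoup, WithLp.equiv_symm_apply, PiLp.toLp_apply, PiLp.add_apply, PiLp.smul_apply,
    smul_eq_mul, Finset.mul_sum, ← Finset.sum_add_distrib, Pi.add_apply, Pi.smul_apply]
  exact Finset.sum_congr rfl fun j _ => by ring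

lemma rhoNormSq_nonneg {n d : ℕ} (k : Fin n → Fin n → ℝ) (π : Measure (St n d)) (ψ : ℝ → ℝ) :
    0 ≤ rhoNormSq k π ψ := by
  refine mul_nonneg (by positivity) (Finset.sum_nonneg fun p _ => ?_)
  exact integral_nonneg fun x => sq_nonneg _

theorem statement12 {n d : ℕ} (k : Fin n → Fin n → ℝ) (φ : ℝ → ℝ) (σ R : ℝ)
    (hσ : 0 ≤ σ) (hR : 0 < R)
    (π : Measure (St n d)) [IsProbabilityMeasure π]
    (hπR : ∀ p ∈ edgeFinset k, ∀ᵐ x ∂π, rdist x p.1 p.2 ≤ R)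
    (H : Set (ℝ → ℝ)) (hconv : Convex ℝ H)
    (hmem : ∀ ψ ∈ H, MemLp (fun x => Fcoup k ψ x - Fcoup k φ x) 2 π)
    (cH : ℝ) (hcH : 0 < cH)
    (hcoer : ∀ ψ₁ ∈ H, ∀ ψ₂ ∈ H,
      cH * rhoNormSq k π (fun r => ψ₁ r - ψ₂ r) ≤
        ((edgeFinset k).card : ℝ)⁻¹ * ∫ x, ‖Fcoup k (fun r => ψ₁ r - ψ₂ r) x‖ ^ 2 ∂π)
    (φhat : ℝ → ℝ) (hφhat : φhat ∈ H)
    (hmin : ∀ ψ ∈ H, expErr k φ σ π φhat ≤ expErr k φ σ π ψ) :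
    (∀ ψ ∈ H, cH * rhoNormSq k π (fun r => ψ r - φhat r) ≤
        expErr k φ σ π ψ - expErr k φ σ π φhat) ∧
      (∀ φhat' ∈ H, (∀ ψ ∈ H, expErr k φ σ π φhat' ≤ expErr k φ σ π ψ) →
        rhoNormSq k π (fun r => φhat' r - φhat r) = 0) := by
  have key : ∀ ψ ∈ H, cH * rhoNormSq k π (fun r => ψ r - φhat r) ≤
      expErr k φ σ π ψ - expErr k φ σ π φhat := by
    intro ψ hψ
    set N : ℝ := ((edgeFinset k).card : ℝ) with hN
    set g : St n d → St n d := fun x => Fcoup k ψ x - Fcoup k φ x with hg_def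
    set h : St n d → St n d := fun x => Fcoup k φhat x - Fcoup k φ x with hh_def
    have hg : MemLp g 2 π := hmem ψ hψ
    have hh : MemLp h 2 π := hmem φhat hφhat
    have hu : MemLp (fun x => g x - h x) 2 π := hg.sub hh
    have hFsub : ∀ x, Fcoup k (fun r => ψ r - φhat r) x = g x - h x := by
      intro x
      rw [Fcoup_sub]
      simp only [hg_def, hh_def]
      abel
    -- integrability facts
    have ih2 : Integrable (fun x => ‖h x‖ ^ 2) π := hh.norm.integrable_sq
    have iJ : Integrable (fun x => ‖g x - h x‖ ^ 2) π := hu.norm.integrable_sq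
    have iI : Integrable (fun x => (inner ℝ (h x) (g x - h x) : ℝ)) π := by
      refine Integrable.mono' ((ih2.add iJ).div_const 2)
        (hh.aestronglyMeasurable.inner hu.aestronglyMeasurable)
        (Filter.Eventually.of_forall fun x => ?_)
      have h1 : ‖(inner ℝ (h x) (g x - h x) : ℝ)‖ ≤ ‖h x‖ * ‖g x - h x‖ := norm_inner_le_norm _ _
      have h2 : ‖h x‖ * ‖g x - h x‖ ≤ (‖h x‖ ^ 2 + ‖g x - h x‖ ^ 2) / 2 := by nlinarith [sq_nonneg (‖h x‖ - ‖g x - h x‖)]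
      calc ‖(inner ℝ (h x) (g x - h x) : ℝ)‖ ≤ _ := h1
        _ ≤ _ := h2
    set I : ℝ := ∫ x, (inner ℝ (h x) (g x - h x) : ℝ) ∂π with hI_def
    set J : ℝ := ∫ x, ‖g x - h x‖ ^ 2 ∂π with hJ_def
    have hJ0 : 0 ≤ J := integral_nonneg fun x => sq_nonneg _
    have expand : ∀ t : ℝ, ∫ x, ‖h x + t • (g x - h x)‖ ^ 2 ∂π
        = (∫ x, ‖h x‖ ^ 2 ∂π) + 2 * t * I + t ^ 2 * J := by
      intro t
      have hpt : ∀ x, ‖h x + t • (g x - h x)‖ ^ 2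
          = ‖h x‖ ^ 2 + (2 * t) * (inner ℝ (h x) (g x - h x) : ℝ) + t ^ 2 * ‖g x - h x‖ ^ 2 := by
        intro x
        rw [norm_add_sq_real, real_inner_smul_right, norm_smul, mul_pow, Real.norm_eq_abs, sq_abs]
        ring
      have iB : Integrable (fun x => (2 * t) * (inner ℝ (h x) (g x - h x) : ℝ)) π :=
        iI.const_mul _
      have iC : Integrable (fun x => t ^ 2 * ‖g x - h x‖ ^ 2) π := iJ.const_mul _
      have iA : Integrable
          (fun x => ‖h x‖ ^ 2 + (2 * t) * (inner ℝ (h x) (g x - h x) : ℝ)) π := ih2.add iB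
      rw [integral_congr_ae (Filter.Eventually.of_forall hpt), integral_add iA iC,
        integral_add ih2 iB, integral_const_mul, integral_const_mul]
    have hgeq : ∀ x, g x = h x + (1 : ℝ) • (g x - h x) := fun x => by
      rw [one_smul]; abel
    have hgint : (∫ x, ‖g x‖ ^ 2 ∂π) = (∫ x, ‖h x‖ ^ 2 ∂π) + 2 * I + J := by
      calc (∫ x, ‖g x‖ ^ 2 ∂π) = ∫ x, ‖h x + (1 : ℝ) • (g x - h x)‖ ^ 2 ∂π :=
            integral_congr_ae (Filter.Eventually.of_forall fun x => by simp only [← hgeq x])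
        _ = (∫ x, ‖h x‖ ^ 2 ∂π) + 2 * 1 * I + 1 ^ 2 * J := expand 1
        _ = _ := by ring
    rcases eq_or_ne N 0 with hN0 | hN0
    · -- degenerate case: no edges
      have hrho : rhoNormSq k π (fun r => ψ r - φhat r) = 0 := by
        unfold rhoNormSq
        rw [← hN, hN0, inv_zero, zero_mul]
      have hE : ∀ χ : ℝ → ℝ, expErr k φ σ π χ = 0 := by
        intro χ
        unfold expErr
        rw [← hN, hN0, inv_zero, zero_mul]
      rw [hrho, hE ψ, hE φhat]
      simp
    · have hNpos : 0 < N := by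
        have : 0 ≤ N := Nat.cast_nonneg _
        exact lt_of_le_of_ne this (Ne.symm hN0)
      -- first-order condition: I ≥ 0
      have hI0 : 0 ≤ I := by
        have ht : ∀ t : ℝ, 0 < t → t ≤ 1 → 0 ≤ 2 * I + t * J := by
          intro t ht0 ht1
          have hmemt : ((t • ψ + (1 - t) • φhat) : ℝ → ℝ) ∈ H :=
            hconv hψ hφhat ht0.le (show (0:ℝ) ≤ 1 - t by linarith) (by ring)
          have hle := hmin _ hmemt
          have hcombo : ∀ x, Fcoup k (t • ψ + (1 - t) • φhat) x - Fcoup k φ x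
              = h x + t • (g x - h x) := by
            intro x
            rw [Fcoup_combo]
            simp only [hg_def, hh_def, smul_sub]
            rw [sub_smul, one_smul]
            abel
          have hEt : expErr k φ σ π (t • ψ + (1 - t) • φhat)
              = N⁻¹ * (((∫ x, ‖h x‖ ^ 2 ∂π) + 2 * t * I + t ^ 2 * J) + σ ^ 2) := by
            rw [expErr, ← hN, ← expand t]
            congr 2
            exact integral_congr_ae (Filter.Eventually.of_forall fun x => by simp only [hcombo x])
          have hEhat : expErr k φ σ π φhat
              = N⁻¹ * ((∫ x, ‖h x‖ ^ 2 ∂π) + σ ^ 2) := by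
            rw [expErr, ← hN]
          rw [hEt, hEhat] at hle
          have h2 : (∫ x, ‖h x‖ ^ 2 ∂π) + σ ^ 2
              ≤ ((∫ x, ‖h x‖ ^ 2 ∂π) + 2 * t * I + t ^ 2 * J) + σ ^ 2 :=
            le_of_mul_le_mul_left hle (show (0:ℝ) < N⁻¹ from inv_pos.mpr hNpos)
          nlinarith
        by_contra hI
        push_neg at hI
        rcases eq_or_lt_of_le hJ0 with hJe | hJp
        · have := ht 1 one_pos le_rfl
          nlinarith
        · have htv : 0 < min 1 (-I / J) := by
            exact lt_min one_pos (div_pos (by linarith) hJp)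
          have := ht _ htv (min_le_left _ _)
          have hmle : min 1 (-I / J) * J ≤ (-I / J) * J :=
            mul_le_mul_of_nonneg_right (min_le_right _ _) hJ0
          rw [div_mul_cancel₀ _ hJp.ne'] at hmle
          nlinarith
      -- assemble
      have hdiff : expErr k φ σ π ψ - expErr k φ σ π φhat = N⁻¹ * (2 * I + J) := by
        rw [expErr, expErr, ← hN]
        rw [show (∫ x, ‖Fcoup k ψ x - Fcoup k φ x‖ ^ 2 ∂π) = ∫ x, ‖g x‖ ^ 2 ∂π from rfl,
          show (∫ x, ‖Fcoup k φhat x - Fcoup k φ x‖ ^ 2 ∂π) = ∫ x, ‖h x‖ ^ 2 ∂π from rfl,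
          hgint]
        ring
      have hcoe := hcoer ψ hψ φhat hφhat
      have hJeq : (∫ x, ‖Fcoup k (fun r => ψ r - φhat r) x‖ ^ 2 ∂π) = J := by
        rw [hJ_def]
        exact integral_congr_ae (Filter.Eventually.of_forall fun x => by simp only [hFsub x])
      rw [hJeq] at hcoe
      rw [hdiff]
      calc cH * rhoNormSq k π (fun r => ψ r - φhat r) ≤ N⁻¹ * J := hcoe
        _ ≤ N⁻¹ * (2 * I + J) := by
            apply mul_le_mul_of_nonneg_left (by linarith) (inv_nonneg.mpr hNpos.le)
  refine ⟨key, fun φhat' hφ' hmin' => ?_⟩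
  have h1 := key φhat' hφ'
  have h2 := hmin' φhat hφhat
  have h3 := hmin φhat' hφ'
  have h4 : expErr k φ σ π φhat' - expErr k φ σ π φhat = 0 := by linarith
  have h5 := rhoNormSq_nonneg k π (fun r => φhat' r - φhat r)
  nlinarith

end
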